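/- For every natural number n with 1 ≤ n ≤ 4 and every index i : Fin n, the root s i, viewed inside the algebraic closure Ē of E, lies in solvableByRad F Ē: every root of the general monic equation of degree at most 4 can be expressed from the coefficients using +, −, ×, ÷ and extraction of roots. -/

import Mathlib

open MvPolynomial

/-- `E n` is the field of rational functions in `n` variables over `ℚ`. -/
noncomputable abbrev E (n : ℕ) : Type :=
  FractionRing (MvPolynomial (Fin n) ℚ)

/-- `s n i` is the image in `E n` of the variable `X i`; these are the roots of the
general monic polynomial of degree `n`. -/
noncomputable def s (n : ℕ) (i : Fin n) : E n :=
  algebraMap (MvPolynomial (Fin n) ℚ) (E n) (X i)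

/-- `F n` is the subfield of `E n` generated by the images of the elementary symmetric
polynomials `e₁, …, eₙ`, i.e. by the coefficients of the general monic polynomial
`∏ i, (Y - s i)` of degree `n`. -/
noncomputable def F (n : ℕ) : Subfield (E n) :=
  Subfield.closure
    (Set.range fun k : Fin n =>
      algebraMap (MvPolynomial (Fin n) ℚ) (E n) (esymm (Fin n) ℚ ((k : ℕ) + 1)))

section Helpers

variable {K L : Type*} [Field K] [Field L] [Algebra K L]

lemma SBR.rad_mem {x : L} (m : ℕ) (hm : m ≠ 0) (h : x ^ m ∈ solvableByRad K L) :
    x ∈ solvableByRad K L :=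
  solvableByRad.rad_mem hm h

lemma SBR.nat_mem (m : ℕ) : ((m : ℕ) : L) ∈ solvableByRad K L := natCast_mem _ m

lemma SBR.quadratic_mem [CharZero L] {x y : L} (h1 : x + y ∈ solvableByRad K L)
    (h2 : x * y ∈ solvableByRad K L) : x ∈ solvableByRad K L := by
  have h4 : ((4:ℕ) : L) ∈ solvableByRad K L := SBR.nat_mem 4
  have h2' : ((2:ℕ) : L) ∈ solvableByRad K L := SBR.nat_mem 2
  have hd : x - y ∈ solvableByRad K L := by
    refine SBR.rad_mem 2 two_ne_zero ?_
    have : (x - y) ^ 2 = (x + y) ^ 2 - ((4:ℕ):L) * (x * y) := by push_cast; ring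
    rw [this]
    exact sub_mem (pow_mem h1 2) (mul_mem h4 h2)
  have hx : x = ((x + y) + (x - y)) / ((2:ℕ):L) := by push_cast; ring
  rw [hx]
  exact div_mem (add_mem h1 hd) h2'

lemma SBR.cubic_mem [IsAlgClosed L] [CharZero L] {x y z : L}
    (h1 : x + y + z ∈ solvableByRad K L)
    (h2 : x * y + x * z + y * z ∈ solvableByRad K L)
    (h3 : x * y * z ∈ solvableByRad K L) : x ∈ solvableByRad K L := by
  -- a primitive cube root of unity
  have hd : (Polynomial.X ^ 2 + Polynomial.X + 1 : Polynomial L).degree = 2 := by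
    compute_degree!
  obtain ⟨ω, hωr⟩ := IsAlgClosed.exists_root
    (p := (Polynomial.X ^ 2 + Polynomial.X + 1 : Polynomial L)) (by rw [hd]; norm_num)
  have hω : ω ^ 2 + ω + 1 = 0 := by simpa [Polynomial.IsRoot] using hωr
  have hω3 : ω ^ 3 = 1 := by linear_combination (ω - 1) * hω
  have hωK : ω ∈ solvableByRad K L := by
    refine SBR.rad_mem 3 three_ne_zero ?_
    rw [hω3]; exact one_mem _
  -- the square root of the discriminant
  set δ : L := (x - y) * (x - z) * (y - z) with hδdef
  have hδ : δ ∈ solvableByRad K L := by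
    refine SBR.rad_mem 2 two_ne_zero ?_
    have : δ ^ 2 = (x + y + z) ^ 2 * (x * y + x * z + y * z) ^ 2
        - ((4:ℕ):L) * (x * y + x * z + y * z) ^ 3
        - ((4:ℕ):L) * (x + y + z) ^ 3 * (x * y * z)
        + ((18:ℕ):L) * (x + y + z) * (x * y + x * z + y * z) * (x * y * z)
        - ((27:ℕ):L) * (x * y * z) ^ 2 := by push_cast; ring
    rw [this]
    refine sub_mem (add_mem (sub_mem (sub_mem (mul_mem (pow_mem h1 2) (pow_mem h2 2))
      (mul_mem (SBR.nat_mem 4) (pow_mem h2 3)))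
      (mul_mem (mul_mem (SBR.nat_mem 4) (pow_mem h1 3)) h3))
      (mul_mem (mul_mem (mul_mem (SBR.nat_mem 18) h1) h2) h3))
      (mul_mem (SBR.nat_mem 27) (pow_mem h3 2))
  -- Lagrange resolvents
  set u : L := x + ω * y + ω ^ 2 * z with hu
  set v : L := x + ω ^ 2 * y + ω * z with hv
  have hsum : u ^ 3 + v ^ 3 = ((2:ℕ):L) * (x + y + z) ^ 3
      - ((9:ℕ):L) * (x + y + z) * (x * y + x * z + y * z) + ((27:ℕ):L) * (x * y * z) := by
    push_cast
    rw [hu, hv]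
    linear_combination (-2*z^3 + 2*z^3*ω - z^3*ω^3 + z^3*ω^4 + 3*y*z^2 - 3*y*z^2*ω
      + 3*y*z^2*ω^3 + 3*y^2*z - 3*y^2*z*ω + 3*y^2*z*ω^3 - 2*y^3 + 2*y^3*ω - y^3*ω^3
      + y^3*ω^4 + 3*x*z^2 - 3*x*z^2*ω + 3*x*z^2*ω^2 - 12*x*y*z + 12*x*y*z*ω
      + 3*x*y^2 - 3*x*y^2*ω + 3*x*y^2*ω^2 + 3*x^2*z + 3*x^2*y) * hω
  have hdiff : u ^ 3 - v ^ 3 = ((3:ℕ):L) * (ω - ω ^ 2) * δ := by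
    push_cast
    rw [hu, hv, hδdef]
    linear_combination (-z^3*ω^3 + z^3*ω^4 + 3*y*z^2*ω - 6*y*z^2*ω^2 + 3*y*z^2*ω^3
      - 3*y^2*z*ω + 6*y^2*z*ω^2 - 3*y^2*z*ω^3 + y^3*ω^3 - y^3*ω^4 - 3*x*z^2*ω
      + 3*x*z^2*ω^2 + 3*x*y^2*ω - 3*x*y^2*ω^2) * hω
  have hu3 : u ^ 3 ∈ solvableByRad K L := by
    have : u ^ 3 = ((u ^ 3 + v ^ 3) + (u ^ 3 - v ^ 3)) / ((2:ℕ):L) := by push_cast; ring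
    rw [this, hsum, hdiff]
    refine div_mem (add_mem ?_ ?_) (SBR.nat_mem 2)
    · exact add_mem (sub_mem (mul_mem (SBR.nat_mem 2) (pow_mem h1 3))
        (mul_mem (mul_mem (SBR.nat_mem 9) h1) h2)) (mul_mem (SBR.nat_mem 27) h3)
    · exact mul_mem (mul_mem (SBR.nat_mem 3) (sub_mem hωK (pow_mem hωK 2))) hδ
  have hv3 : v ^ 3 ∈ solvableByRad K L := by
    have : v ^ 3 = ((u ^ 3 + v ^ 3) - (u ^ 3 - v ^ 3)) / ((2:ℕ):L) := by push_cast; ring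
    rw [this, hsum, hdiff]
    refine div_mem (sub_mem ?_ ?_) (SBR.nat_mem 2)
    · exact add_mem (sub_mem (mul_mem (SBR.nat_mem 2) (pow_mem h1 3))
        (mul_mem (mul_mem (SBR.nat_mem 9) h1) h2)) (mul_mem (SBR.nat_mem 27) h3)
    · exact mul_mem (mul_mem (SBR.nat_mem 3) (sub_mem hωK (pow_mem hωK 2))) hδ
  have huK : u ∈ solvableByRad K L := SBR.rad_mem 3 three_ne_zero hu3
  have hvK : v ∈ solvableByRad K L := SBR.rad_mem 3 three_ne_zero hv3
  have hx : x = ((x + y + z) + u + v) / ((3:ℕ):L) := by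
    rw [eq_div_iff (Nat.cast_ne_zero.mpr (by norm_num) : ((3:ℕ):L) ≠ 0)]
    push_cast
    rw [hu, hv]
    linear_combination (-z - y) * hω
  rw [hx]
  exact div_mem (add_mem (add_mem h1 huK) hvK) (SBR.nat_mem 3)

end Helpers

section Esymm

lemma esymm1_1 : esymm (Fin 1) ℚ 1 = X 0 := by
  rw [esymm, show Finset.powersetCard 1 (Finset.univ : Finset (Fin 1)) = {{0}} from by decide]
  rw [Finset.sum_singleton, Finset.prod_singleton]

lemma esymm2_1 : esymm (Fin 2) ℚ 1 = X 0 + X 1 := by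
  rw [esymm, show Finset.powersetCard 1 (Finset.univ : Finset (Fin 2)) = {{0},{1}} from by decide]
  repeat rw [Finset.sum_insert (by decide)]
  rw [Finset.sum_singleton]
  repeat rw [Finset.prod_singleton]

lemma esymm2_2 : esymm (Fin 2) ℚ 2 = X 0 * X 1 := by
  rw [esymm, show Finset.powersetCard 2 (Finset.univ : Finset (Fin 2)) = {{0,1}} from by decide]
  rw [Finset.sum_singleton, Finset.prod_pair (by decide)]

lemma esymm3_1 : esymm (Fin 3) ℚ 1 = X 0 + X 1 + X 2 := by
  rw [esymm, show Finset.powersetCard 1 (Finset.univ : Finset (Fin 3)) = {{0},{1},{2}} from by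
    decide]
  repeat rw [Finset.sum_insert (by decide)]
  rw [Finset.sum_singleton]
  repeat rw [Finset.prod_singleton]
  ring

lemma esymm3_2 : esymm (Fin 3) ℚ 2 = X 0 * X 1 + X 0 * X 2 + X 1 * X 2 := by
  rw [esymm, show Finset.powersetCard 2 (Finset.univ : Finset (Fin 3)) = {{0,1},{0,2},{1,2}} from
    by decide]
  repeat rw [Finset.sum_insert (by decide)]
  rw [Finset.sum_singleton]
  repeat rw [Finset.prod_pair (by decide)]
  ring

lemma esymm3_3 : esymm (Fin 3) ℚ 3 = X 0 * X 1 * X 2 := by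
  rw [esymm, show Finset.powersetCard 3 (Finset.univ : Finset (Fin 3)) = {{0,1,2}} from by decide]
  rw [Finset.sum_singleton]
  repeat first
    | rw [Finset.prod_insert (by decide)]
    | rw [Finset.prod_singleton]
  ring

lemma esymm4_1 : esymm (Fin 4) ℚ 1 = X 0 + X 1 + X 2 + X 3 := by
  rw [esymm, show Finset.powersetCard 1 (Finset.univ : Finset (Fin 4)) = {{0},{1},{2},{3}} from by
    decide]
  repeat rw [Finset.sum_insert (by decide)]
  rw [Finset.sum_singleton]
  repeat rw [Finset.prod_singleton]
  ring

lemma esymm4_2 : esymm (Fin 4) ℚ 2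
    = X 0 * X 1 + X 0 * X 2 + X 0 * X 3 + X 1 * X 2 + X 1 * X 3 + X 2 * X 3 := by
  rw [esymm, show Finset.powersetCard 2 (Finset.univ : Finset (Fin 4))
    = {{0,1},{0,2},{0,3},{1,2},{1,3},{2,3}} from by decide]
  repeat rw [Finset.sum_insert (by decide)]
  rw [Finset.sum_singleton]
  repeat rw [Finset.prod_pair (by decide)]
  ring

lemma esymm4_3 : esymm (Fin 4) ℚ 3
    = X 0 * X 1 * X 2 + X 0 * X 1 * X 3 + X 0 * X 2 * X 3 + X 1 * X 2 * X 3 := by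
  rw [esymm, show Finset.powersetCard 3 (Finset.univ : Finset (Fin 4))
    = {{0,1,2},{0,1,3},{0,2,3},{1,2,3}} from by decide]
  repeat rw [Finset.sum_insert (by decide)]
  rw [Finset.sum_singleton]
  repeat first
    | rw [Finset.prod_insert (by decide)]
    | rw [Finset.prod_singleton]
  ring

lemma esymm4_4 : esymm (Fin 4) ℚ 4 = X 0 * X 1 * X 2 * X 3 := by
  rw [esymm, show Finset.powersetCard 4 (Finset.univ : Finset (Fin 4)) = {{0,1,2,3}} from by
    decide]
  rw [Finset.sum_singleton]
  repeat first
    | rw [Finset.prod_insert (by decide)]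
    | rw [Finset.prod_singleton]
  ring

end Esymm

section Gen

/-- The image in the algebraic closure of a generator of `F n` is solvable by radicals. -/
lemma gen_mem (n : ℕ) (k : Fin n) :
    algebraMap (E n) (AlgebraicClosure (E n))
      (algebraMap (MvPolynomial (Fin n) ℚ) (E n) (esymm (Fin n) ℚ ((k : ℕ) + 1))) ∈
      solvableByRad (F n) (AlgebraicClosure (E n)) := by
  have hmem : algebraMap (MvPolynomial (Fin n) ℚ) (E n) (esymm (Fin n) ℚ ((k : ℕ) + 1)) ∈ F n :=
    Subfield.subset_closure ⟨k, rfl⟩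
  have h := (solvableByRad (F n) (AlgebraicClosure (E n))).algebraMap_mem
    (⟨_, hmem⟩ : F n)
  convert h using 1
  exact (IsScalarTower.algebraMap_apply (F n) (E n) (AlgebraicClosure (E n))
    (⟨_, hmem⟩ : F n)).symm

end Gen

set_option maxHeartbeats 2000000

/-- For `1 ≤ n ≤ 4`, every root of the general monic equation of degree `n` lies in
`solvableByRad F Ē`: it can be expressed from the coefficients using `+`, `-`, `×`, `÷`
and extraction of roots. -/
theorem solvable_of_degree_le_four (n : ℕ) (hn₁ : 1 ≤ n) (hn₄ : n ≤ 4) (i : Fin n) :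
    algebraMap (E n) (AlgebraicClosure (E n)) (s n i) ∈
      solvableByRad (F n) (AlgebraicClosure (E n)) := by
  interval_cases n
  · -- n = 1
    have h := gen_mem 1 0
    rw [show ((0 : Fin 1) : ℕ) + 1 = 1 from rfl, esymm1_1] at h
    have hi : i = 0 := Subsingleton.elim i 0
    rw [hi]
    exact h
  · -- n = 2
    have h1 := gen_mem 2 0
    have h2 := gen_mem 2 1
    rw [show ((0 : Fin 2) : ℕ) + 1 = 1 from rfl, esymm2_1] at h1
    rw [show ((1 : Fin 2) : ℕ) + 1 = 2 from rfl, esymm2_2] at h2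
    simp only [map_add, map_mul] at h1 h2
    set a := algebraMap (E 2) (AlgebraicClosure (E 2)) (s 2 0) with ha
    set b := algebraMap (E 2) (AlgebraicClosure (E 2)) (s 2 1) with hb
    have h1' : a + b ∈ solvableByRad (F 2) (AlgebraicClosure (E 2)) := h1
    have h2' : a * b ∈ solvableByRad (F 2) (AlgebraicClosure (E 2)) := h2
    fin_cases i
    · exact SBR.quadratic_mem h1' h2'
    · exact SBR.quadratic_mem (by rwa [add_comm] at h1') (by rwa [mul_comm] at h2')
  · -- n = 3
    have h1 := gen_mem 3 0
    have h2 := gen_mem 3 1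
    have h3 := gen_mem 3 2
    rw [show ((0 : Fin 3) : ℕ) + 1 = 1 from rfl, esymm3_1] at h1
    rw [show ((1 : Fin 3) : ℕ) + 1 = 2 from rfl, esymm3_2] at h2
    rw [show ((2 : Fin 3) : ℕ) + 1 = 3 from rfl, esymm3_3] at h3
    simp only [map_add, map_mul] at h1 h2 h3
    set a := algebraMap (E 3) (AlgebraicClosure (E 3)) (s 3 0) with ha
    set b := algebraMap (E 3) (AlgebraicClosure (E 3)) (s 3 1) with hb
    set c := algebraMap (E 3) (AlgebraicClosure (E 3)) (s 3 2) with hc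
    have h1' : a + b + c ∈ solvableByRad (F 3) (AlgebraicClosure (E 3)) := h1
    have h2' : a * b + a * c + b * c ∈ solvableByRad (F 3) (AlgebraicClosure (E 3)) := h2
    have h3' : a * b * c ∈ solvableByRad (F 3) (AlgebraicClosure (E 3)) := h3
    fin_cases i
    · exact SBR.cubic_mem h1' h2' h3'
    · exact SBR.cubic_mem (show b + a + c ∈ _ by rwa [show b + a + c = a + b + c from by ring])
        (show b * a + b * c + a * c ∈ _ by
          rwa [show b * a + b * c + a * c = a * b + a * c + b * c from by ring])
        (show b * a * c ∈ _ by rwa [show b * a * c = a * b * c from by ring])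
    · exact SBR.cubic_mem (show c + a + b ∈ _ by rwa [show c + a + b = a + b + c from by ring])
        (show c * a + c * b + a * b ∈ _ by
          rwa [show c * a + c * b + a * b = a * b + a * c + b * c from by ring])
        (show c * a * b ∈ _ by rwa [show c * a * b = a * b * c from by ring])
  · -- n = 4
    have h1 := gen_mem 4 0
    have h2 := gen_mem 4 1
    have h3 := gen_mem 4 2
    have h4 := gen_mem 4 3
    rw [show ((0 : Fin 4) : ℕ) + 1 = 1 from rfl, esymm4_1] at h1
    rw [show ((1 : Fin 4) : ℕ) + 1 = 2 from rfl, esymm4_2] at h2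
    rw [show ((2 : Fin 4) : ℕ) + 1 = 3 from rfl, esymm4_3] at h3
    rw [show ((3 : Fin 4) : ℕ) + 1 = 4 from rfl, esymm4_4] at h4
    simp only [map_add, map_mul] at h1 h2 h3 h4
    set K := solvableByRad (F 4) (AlgebraicClosure (E 4)) with hK
    set a := algebraMap (E 4) (AlgebraicClosure (E 4)) (s 4 0) with ha
    set b := algebraMap (E 4) (AlgebraicClosure (E 4)) (s 4 1) with hb
    set c := algebraMap (E 4) (AlgebraicClosure (E 4)) (s 4 2) with hc
    set d := algebraMap (E 4) (AlgebraicClosure (E 4)) (s 4 3) with hd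
    have e1 : a + b + c + d ∈ K := h1
    have e2 : a * b + a * c + a * d + b * c + b * d + c * d ∈ K := h2
    have e3 : a * b * c + a * b * d + a * c * d + b * c * d ∈ K := h3
    have e4 : a * b * c * d ∈ K := h4
    -- the three Ferrari resolvents
    set t1 := a + b - c - d with ht1
    set t2 := a - b + c - d with ht2
    set t3 := a - b - c + d with ht3
    -- elementary symmetric functions of t1², t2², t3² are in K
    have p1 : t1 ^ 2 + t2 ^ 2 + t3 ^ 2 ∈ K := by
      have : t1 ^ 2 + t2 ^ 2 + t3 ^ 2 = ((3:ℕ) : AlgebraicClosure (E 4)) * (a + b + c + d) ^ 2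
          - ((8:ℕ) : AlgebraicClosure (E 4))
            * (a * b + a * c + a * d + b * c + b * d + c * d) := by
        push_cast; rw [ht1, ht2, ht3]; ring
      rw [this]
      exact sub_mem (mul_mem (SBR.nat_mem 3) (pow_mem e1 2)) (mul_mem (SBR.nat_mem 8) e2)
    have p2 : t1 ^ 2 * t2 ^ 2 + t1 ^ 2 * t3 ^ 2 + t2 ^ 2 * t3 ^ 2 ∈ K := by
      have : t1 ^ 2 * t2 ^ 2 + t1 ^ 2 * t3 ^ 2 + t2 ^ 2 * t3 ^ 2
          = ((3:ℕ) : AlgebraicClosure (E 4)) * (a + b + c + d) ^ 4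
          - ((16:ℕ) : AlgebraicClosure (E 4)) * (a + b + c + d) ^ 2
            * (a * b + a * c + a * d + b * c + b * d + c * d)
          + ((16:ℕ) : AlgebraicClosure (E 4))
            * (a * b + a * c + a * d + b * c + b * d + c * d) ^ 2
          + ((16:ℕ) : AlgebraicClosure (E 4)) * (a + b + c + d)
            * (a * b * c + a * b * d + a * c * d + b * c * d)
          - ((64:ℕ) : AlgebraicClosure (E 4)) * (a * b * c * d) := by
        push_cast; rw [ht1, ht2, ht3]; ring
      rw [this]
      exact sub_mem (add_mem (add_mem (sub_mem (mul_mem (SBR.nat_mem 3) (pow_mem e1 4))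
        (mul_mem (mul_mem (SBR.nat_mem 16) (pow_mem e1 2)) e2))
        (mul_mem (SBR.nat_mem 16) (pow_mem e2 2)))
        (mul_mem (mul_mem (SBR.nat_mem 16) e1) e3))
        (mul_mem (SBR.nat_mem 64) e4)
    have p3 : t1 ^ 2 * t2 ^ 2 * t3 ^ 2 ∈ K := by
      have : t1 ^ 2 * t2 ^ 2 * t3 ^ 2 = ((a + b + c + d) ^ 3
          - ((4:ℕ) : AlgebraicClosure (E 4)) * (a + b + c + d)
            * (a * b + a * c + a * d + b * c + b * d + c * d)
          + ((8:ℕ) : AlgebraicClosure (E 4))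
            * (a * b * c + a * b * d + a * c * d + b * c * d)) ^ 2 := by
        push_cast; rw [ht1, ht2, ht3]; ring
      rw [this]
      exact pow_mem (add_mem (sub_mem (pow_mem e1 3)
        (mul_mem (mul_mem (SBR.nat_mem 4) e1) e2)) (mul_mem (SBR.nat_mem 8) e3)) 2
    -- each tᵢ² ∈ K by the cubic lemma, hence tᵢ ∈ K
    have ht1K : t1 ∈ K :=
      SBR.rad_mem 2 two_ne_zero (SBR.cubic_mem p1 p2 p3)
    have ht2K : t2 ∈ K := by
      refine SBR.rad_mem 2 two_ne_zero (SBR.cubic_mem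
        (show t2 ^ 2 + t1 ^ 2 + t3 ^ 2 ∈ K from ?_)
        (show t2 ^ 2 * t1 ^ 2 + t2 ^ 2 * t3 ^ 2 + t1 ^ 2 * t3 ^ 2 ∈ K from ?_)
        (show t2 ^ 2 * t1 ^ 2 * t3 ^ 2 ∈ K from ?_))
      · rwa [show t2 ^ 2 + t1 ^ 2 + t3 ^ 2 = t1 ^ 2 + t2 ^ 2 + t3 ^ 2 from by ring]
      · rwa [show t2 ^ 2 * t1 ^ 2 + t2 ^ 2 * t3 ^ 2 + t1 ^ 2 * t3 ^ 2
          = t1 ^ 2 * t2 ^ 2 + t1 ^ 2 * t3 ^ 2 + t2 ^ 2 * t3 ^ 2 from by ring]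
      · rwa [show t2 ^ 2 * t1 ^ 2 * t3 ^ 2 = t1 ^ 2 * t2 ^ 2 * t3 ^ 2 from by ring]
    have ht3K : t3 ∈ K := by
      refine SBR.rad_mem 2 two_ne_zero (SBR.cubic_mem
        (show t3 ^ 2 + t1 ^ 2 + t2 ^ 2 ∈ K from ?_)
        (show t3 ^ 2 * t1 ^ 2 + t3 ^ 2 * t2 ^ 2 + t1 ^ 2 * t2 ^ 2 ∈ K from ?_)
        (show t3 ^ 2 * t1 ^ 2 * t2 ^ 2 ∈ K from ?_))
      · rwa [show t3 ^ 2 + t1 ^ 2 + t2 ^ 2 = t1 ^ 2 + t2 ^ 2 + t3 ^ 2 from by ring]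
      · rwa [show t3 ^ 2 * t1 ^ 2 + t3 ^ 2 * t2 ^ 2 + t1 ^ 2 * t2 ^ 2
          = t1 ^ 2 * t2 ^ 2 + t1 ^ 2 * t3 ^ 2 + t2 ^ 2 * t3 ^ 2 from by ring]
      · rwa [show t3 ^ 2 * t1 ^ 2 * t2 ^ 2 = t1 ^ 2 * t2 ^ 2 * t3 ^ 2 from by ring]
    -- recover the roots
    have hmem : ∀ x : AlgebraicClosure (E 4),
        x = ((a + b + c + d) + t1 + t2 + t3) / ((4:ℕ) : AlgebraicClosure (E 4)) ∨
        x = ((a + b + c + d) + t1 - t2 - t3) / ((4:ℕ) : AlgebraicClosure (E 4)) ∨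
        x = ((a + b + c + d) - t1 + t2 - t3) / ((4:ℕ) : AlgebraicClosure (E 4)) ∨
        x = ((a + b + c + d) - t1 - t2 + t3) / ((4:ℕ) : AlgebraicClosure (E 4)) →
        x ∈ K := by
      intro x hx
      rcases hx with h | h | h | h <;> rw [h] <;>
        first
        | exact div_mem (add_mem (add_mem (add_mem e1 ht1K) ht2K) ht3K) (SBR.nat_mem 4)
        | exact div_mem (sub_mem (sub_mem (add_mem e1 ht1K) ht2K) ht3K) (SBR.nat_mem 4)
        | exact div_mem (sub_mem (add_mem (sub_mem e1 ht1K) ht2K) ht3K) (SBR.nat_mem 4)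
        | exact div_mem (add_mem (sub_mem (sub_mem e1 ht1K) ht2K) ht3K) (SBR.nat_mem 4)
    fin_cases i
    · exact hmem a (Or.inl (by push_cast; rw [ht1, ht2, ht3]; ring))
    · exact hmem b (Or.inr (Or.inl (by push_cast; rw [ht1, ht2, ht3]; ring)))
    · exact hmem c (Or.inr (Or.inr (Or.inl (by push_cast; rw [ht1, ht2, ht3]; ring))))
    · exact hmem d (Or.inr (Or.inr (Or.inr (by push_cast; rw [ht1, ht2, ht3]; ring))))
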